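/- Let (M,g,φ) be a Riemannian manifold with density and let ν be a distribution on M that is parallel with respect to the weighted connection ∇^φ (i.e. ∇^φ_X Y is a section of ν whenever Y is a section of ν). Then both ν and its g-orthogonal complement ν^⊥ are integrable distributions. -/
import Mathlib


/-!
An algebraic (Koszul-style) model of the calculus of smooth functions and smooth vector
fields on a smooth manifold `M`:  `V` plays the role of the space of smooth vector fields
on `M`, a module over the ring `M → ℝ` of (smooth) real-valued functions; `dir X f` is the
directional derivative `D_X f` of the function `f` along the vector field `X`, and
`bracket` is the Lie bracket of vector fields.
-/
structure VectorFieldCalculus (M V : Type*) [AddCommGroup V] [Module (M → ℝ) V] where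
  /-- the directional derivative `D_X f` of a function along a vector field -/
  dir : V → (M → ℝ) → (M → ℝ)
  /-- the Lie bracket of vector fields -/
  bracket : V → V → V
  dir_add : ∀ X f g, dir X (f + g) = dir X f + dir X g
  dir_mul : ∀ X f g, dir X (f * g) = f * dir X g + g * dir X f
  dir_const : ∀ X (c : ℝ), dir X (fun _ => c) = 0
  dir_add_left : ∀ X Y f, dir (X + Y) f = dir X f + dir Y f
  dir_smul_left : ∀ (h : M → ℝ) X f, dir (h • X) f = h * dir X f

/-- A Riemannian metric in the algebraic model:  a symmetric, function-bilinear,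
positive-definite pairing of vector fields with values in functions. -/
structure RiemannMetric (M V : Type*) [AddCommGroup V] [Module (M → ℝ) V] where
  /-- the metric pairing `g(X,Y)`, a function on `M` -/
  g : V → V → M → ℝ
  symm : ∀ X Y, g X Y = g Y X
  add_left : ∀ X Y Z, g (X + Y) Z = g X Z + g Y Z
  smul_left : ∀ (f : M → ℝ) X Y, g (f • X) Y = f * g X Y
  nonneg : ∀ X x, 0 ≤ g X X x
  definite : ∀ X, g X X = 0 → X = 0

variable {M V : Type*} [AddCommGroup V] [Module (M → ℝ) V]

/-- `D` is an affine connection on the vector fields of `M`. -/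
structure IsAffineConnection (C : VectorFieldCalculus M V) (D : V → V → V) : Prop where
  add_left : ∀ X Y Z, D (X + Y) Z = D X Z + D Y Z
  smul_left : ∀ (f : M → ℝ) X Y, D (f • X) Y = f • D X Y
  add_right : ∀ X Y Z, D X (Y + Z) = D X Y + D X Z
  leibniz : ∀ X (f : M → ℝ) Y, D X (f • Y) = C.dir X f • Y + f • D X Y

/-- `D` is torsion-free:  `∇_X Y − ∇_Y X = [X,Y]`. -/
def IsTorsionFree (C : VectorFieldCalculus M V) (D : V → V → V) : Prop :=
  ∀ X Y, D X Y - D Y X = C.bracket X Y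

/-- The connections `D`, `D'` are dual with respect to the metric `gm`:
`D_X g(Y,Z) = g(∇_X Y, Z) + g(Y, ∇*_X Z)`. -/
def AreDual (C : VectorFieldCalculus M V) (gm : RiemannMetric M V)
    (D D' : V → V → V) : Prop :=
  ∀ X Y Z, C.dir X (gm.g Y Z) = gm.g (D X Y) Z + gm.g Y (D' X Z)

/-- The covariant derivative `(∇_X g)(Y,Z)` of the metric with respect to the
connection `D`. -/
def covMetric (C : VectorFieldCalculus M V) (gm : RiemannMetric M V)
    (D : V → V → V) (X Y Z : V) : M → ℝ :=
  C.dir X (gm.g Y Z) - gm.g (D X Y) Z - gm.g Y (D X Z)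

/-- The metric `gm` is Codazzi with respect to `D`:  the `3`-tensor
`D(X,Y,Z) = (∇_X g)(Y,Z)` is totally symmetric. -/
def IsCodazzi (C : VectorFieldCalculus M V) (gm : RiemannMetric M V)
    (D : V → V → V) : Prop :=
  (∀ X Y Z, covMetric C gm D X Y Z = covMetric C gm D Y X Z) ∧
  (∀ X Y Z, covMetric C gm D X Y Z = covMetric C gm D X Z Y)

/-!
STATEMENT 7.  Let `(M,g,φ)` be a Riemannian manifold with density and let `ν` be a
distribution on `M` (modelled by its module of sections, a submodule of the vector
fields) that is parallel with respect to the weighted connection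
`∇^φ_X Y = ∇_X Y − dφ(X)Y − dφ(Y)X`, i.e. `∇^φ_X Y` is a section of `ν` whenever `Y` is.
Then both `ν` and its `g`-orthogonal complement `ν^⊥` are integrable, i.e. their
sections are closed under the Lie bracket.
-/
theorem weighted_parallel_distribution_integrable
    {M V : Type*} [AddCommGroup V] [Module (M → ℝ) V]
    (C : VectorFieldCalculus M V) (gm : RiemannMetric M V)
    (lc : V → V → V) (hlc : IsAffineConnection C lc) (hlcTF : IsTorsionFree C lc)
    (hlcMetric : AreDual C gm lc lc)
    (φ : M → ℝ) (gradphi : V) (hgrad : ∀ X, gm.g gradphi X = C.dir X φ)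
    (ν : Submodule (M → ℝ) V)
    (hpar : ∀ X : V, ∀ Y ∈ ν, (lc X Y - C.dir X φ • Y - C.dir Y φ • X) ∈ ν) :
    (∀ X ∈ ν, ∀ Y ∈ ν, C.bracket X Y ∈ ν) ∧
    (∀ X Y : V, (∀ Z ∈ ν, gm.g X Z = 0) → (∀ Z ∈ ν, gm.g Y Z = 0) →
      ∀ Z ∈ ν, gm.g (C.bracket X Y) Z = 0) := by
  -- auxiliary linearity facts for the metric
  have gadd : ∀ a b c : V, gm.g c (a + b) = gm.g c a + gm.g c b := by
    intro a b c
    rw [gm.symm, gm.add_left, gm.symm a, gm.symm b]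
  have gsmul : ∀ (f : M → ℝ) (a c : V), gm.g c (f • a) = f * gm.g c a := by
    intro f a c
    rw [gm.symm, gm.smul_left, gm.symm]
  have gsub : ∀ a b c : V, gm.g (a - b) c = gm.g a c - gm.g b c := by
    intro a b c
    have : a - b = a + (-1 : M → ℝ) • b := by
      rw [neg_one_smul]; abel
    rw [this, gm.add_left, gm.smul_left]
    ring
  constructor
  · intro X hX Y hY
    have h1 := hpar X Y hY
    have h2 := hpar Y X hX
    have key : C.bracket X Y =
        (lc X Y - C.dir X φ • Y - C.dir Y φ • X) -
        (lc Y X - C.dir Y φ • X - C.dir X φ • Y) := by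
      rw [← hlcTF X Y]; abel
    rw [key]
    exact Submodule.sub_mem ν h1 h2
  · intro X Y hX hY Z hZ
    -- compute g(lc A B, Z) for A,B ⊥ ν
    have main : ∀ A B : V, (∀ W ∈ ν, gm.g A W = 0) → (∀ W ∈ ν, gm.g B W = 0) →
        gm.g (lc A B) Z = - (C.dir Z φ * gm.g B A) := by
      intro A B hA hB
      have hdual := hlcMetric A B Z
      have hBZ : gm.g B Z = 0 := hB Z hZ
      have hzero : C.dir A (gm.g B Z) = 0 := by
        rw [hBZ]
        exact C.dir_const A 0
      have hW := hpar A Z hZ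
      have hdec : lc A Z = (lc A Z - C.dir A φ • Z - C.dir Z φ • A)
          + C.dir A φ • Z + C.dir Z φ • A := by abel
      have hBlcAZ : gm.g B (lc A Z) = C.dir Z φ * gm.g B A := by
        rw [hdec, gadd, gadd, gsmul, gsmul, hB _ hW, hBZ]
        ring
      have := hdual
      rw [hzero, hBlcAZ] at this
      exact eq_neg_of_add_eq_zero_left this.symm
    have h1 := main X Y hX hY
    have h2 := main Y X hY hX
    have hbr : C.bracket X Y = lc X Y - lc Y X := (hlcTF X Y).symm
    rw [hbr, gsub, h1, h2, gm.symm Y X]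
    ring
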